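/- (Infeasibility of Case 4.) Assume c_e ≤ p_e, c_h ≤ p_h, k_e < c_e·X·e/(e−1) and k_h < c_h·Y·e/(e−1). Then (1,1) is not a maximizer of U on the feasible set D: there exists (α,β) ∈ D with U(α,β) > U(1,1). -/

import Mathlib

/-- The DES utility function `U(α,β)` with adaption coefficients
`b_e = (e−1)/X`, `b_h = (e−1)/Y`. -/
noncomputable def desU (X Y ke kh pe ph C0 : ℝ) (q : ℝ × ℝ) : ℝ :=
  ke * Real.log (1 + ((Real.exp 1 - 1) / X) * X * q.1)
  + kh * Real.log (1 + ((Real.exp 1 - 1) / Y) * Y * q.2)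
  + pe * X * (1 - q.1) + ph * Y * (1 - q.2) - C0

/-- The feasible set `D` of the DES optimization problem. -/
def desD (X Y Mmin : ℝ) : Set (ℝ × ℝ) :=
  {q | q.1 ∈ Set.Icc (0:ℝ) 1 ∧ q.2 ∈ Set.Icc (0:ℝ) 1 ∧ X * q.1 + Y * q.2 ≥ Mmin}

/-- Infeasibility of Case 4: under the stated price/coefficient bounds,
`(1,1)` is not a maximizer of `U` on `D`. -/
theorem stmt_4 (X Y ke kh pe ph ce ch C0 Mmin : ℝ)
    (hX : 0 < X) (hY : 0 < Y) (hke : 0 < ke) (hkh : 0 < kh)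
    (hpe : 0 < pe) (hph : 0 < ph) (hce : 0 < ce) (hch : 0 < ch)
    (hM : max X Y < Mmin) (hM' : Mmin < X + Y)
    (h1 : ce ≤ pe) (h2 : ch ≤ ph)
    (h3 : ke < ce * X * Real.exp 1 / (Real.exp 1 - 1))
    (h4 : kh < ch * Y * Real.exp 1 / (Real.exp 1 - 1)) :
    ∃ q ∈ desD X Y Mmin,
      desU X Y ke kh pe ph C0 ((1:ℝ), (1:ℝ)) < desU X Y ke kh pe ph C0 q := by
  set e := Real.exp 1 with he
  have he1 : (1:ℝ) < e := by
    have := Real.add_one_le_exp (1:ℝ); linarith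
  have hem : (0:ℝ) < e - 1 := by linarith
  -- key inequality : ke * (e-1) < pe * X * e
  have hkey : ke * (e - 1) < pe * X * e := by
    have h3' : ke * (e - 1) < ce * X * e := (lt_div_iff₀ hem).mp h3
    nlinarith [mul_nonneg (mul_nonneg (sub_nonneg.mpr h1) hX.le) (by linarith : (0:ℝ) ≤ e)]
  set A := pe * X * e - ke * (e - 1) with hA
  have hApos : 0 < A := by linarith
  set t : ℝ := min (A / (2 * pe * X * (e - 1))) (min ((X + Y - Mmin) / X) 1) with ht
  have htpos : 0 < t := by
    apply lt_min
    · positivity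
    · apply lt_min
      · apply div_pos (by linarith) hX
      · norm_num
  have ht1 : t ≤ 1 := le_trans (min_le_right _ _) (min_le_right _ _)
  have htM : t ≤ (X + Y - Mmin) / X := le_trans (min_le_right _ _) (min_le_left _ _)
  have htA : t ≤ A / (2 * pe * X * (e - 1)) := min_le_left _ _
  set y : ℝ := e - (e - 1) * t with hy
  have hy0 : (0:ℝ) < y := by nlinarith
  -- pe * X * y > ke * (e - 1)
  have hyA : ke * (e - 1) < pe * X * y := by
    have : (e - 1) * t ≤ A / (2 * pe * X) := by
      have h2p : 0 < 2 * pe * X := by positivity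
      have hk : (e - 1) * (A / (2 * pe * X * (e - 1))) = A / (2 * pe * X) := by
        field_simp
      calc (e - 1) * t ≤ (e - 1) * (A / (2 * pe * X * (e - 1))) :=
            mul_le_mul_of_nonneg_left htA (le_of_lt hem)
        _ = A / (2 * pe * X) := hk
    have : pe * X * ((e - 1) * t) ≤ A / 2 := by
      have h2p : (0:ℝ) < 2 * pe * X := by positivity
      calc pe * X * ((e - 1) * t) ≤ pe * X * (A / (2 * pe * X)) := by
            apply mul_le_mul_of_nonneg_left this (by positivity)
        _ = A / 2 := by field_simp
    have : pe * X * y = pe * X * e - pe * X * ((e - 1) * t) := by ring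
    nlinarith
  -- log bound: 1 - log y ≤ (e-1)*t/y
  have hlog : 1 - Real.log y ≤ (e - 1) * t / y := by
    have h := Real.log_le_sub_one_of_pos (show (0:ℝ) < e / y by positivity)
    have hle : Real.log (e / y) = 1 - Real.log y := by
      rw [Real.log_div (by positivity) (ne_of_gt hy0), he, Real.log_exp]
    rw [hle] at h
    have : e / y - 1 = (e - 1) * t / y := by field_simp [hy]; try ring
    linarith
  -- the witness
  refine ⟨(1 - t, 1), ?_, ?_⟩
  · simp only [desD, Set.mem_setOf_eq, Set.mem_Icc]
    refine ⟨⟨by linarith, by linarith⟩, ⟨by norm_num, by norm_num⟩, ?_⟩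
    have : X * t ≤ X + Y - Mmin := by
      calc X * t ≤ X * ((X + Y - Mmin) / X) := mul_le_mul_of_nonneg_left htM (le_of_lt hX)
        _ = X + Y - Mmin := by field_simp
    nlinarith
  · have hXne : X ≠ 0 := ne_of_gt hX
    have hYne : Y ≠ 0 := ne_of_gt hY
    have e1 : ((e - 1) / X) * X * (1:ℝ) = e - 1 := by field_simp
    have e2 : ((e - 1) / Y) * Y * (1:ℝ) = e - 1 := by field_simp
    have e3 : ((e - 1) / X) * X * (1 - t) = (e - 1) * (1 - t) := by field_simp; try ring
    have hlog1 : Real.log (1 + (e - 1)) = 1 := by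
      have : (1:ℝ) + (e - 1) = e := by ring
      rw [this, he, Real.log_exp]
    have hyeq : (1:ℝ) + (e - 1) * (1 - t) = y := by rw [hy]; ring
    simp only [desU, ← he, e1, e2, e3, hlog1, hyeq]
    -- goal : ke*1 + kh*1 + pe*X*(1-1) + ph*Y*(1-1) - C0 < ke*log y + kh*1 + pe*X*(1-(1-t)) + ph*Y*(1-1) - C0
    have hgain : ke * (1 - Real.log y) < pe * X * t := by
      calc ke * (1 - Real.log y) ≤ ke * ((e - 1) * t / y) :=
            mul_le_mul_of_nonneg_left hlog (le_of_lt hke)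
        _ = (ke * (e - 1)) * t / y := by ring
        _ < (pe * X * y) * t / y :=
            (div_lt_div_iff_of_pos_right hy0).mpr (mul_lt_mul_of_pos_right hyA htpos)
        _ = pe * X * t := by field_simp; try ring
    linarith [hgain]
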